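/- Define g : (0, a) → ℝ by g(κ) = (ab/π)·√(1 − (κ/a)²) − (2/π)·arctan(κ/(a√(1 − (κ/a)²))). Then g is continuous and strictly decreasing, g(κ) → ab/π as κ → 0⁺, and g(κ) → −1 as κ → a⁻. Consequently, for each integer n with 1 ≤ n ≤ ⌈ab/π⌉ there is a unique κ_n ∈ (0, a) with g(κ_n) = n − 1, these are the only points of (0,a) where g takes a nonnegative integer value, and κ_1 > κ_2 > ... > κ_{⌈ab/π⌉} > 0. -/

import Mathlib

open Set Filter

/-- The bound-state counting function `g` of the block potential `−a²·χ_{[−b,0]}` is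
continuous and strictly decreasing on `(0,a)`, tends to `ab/π` at `0⁺` and to `−1`
at `a⁻`; consequently for each integer `1 ≤ n ≤ ⌈ab/π⌉` there is a unique
`κ_n ∈ (0,a)` with `g(κ_n) = n − 1`, these are the only points of `(0,a)` where `g`
takes a nonnegative integer value, and `κ_1 > κ_2 > ... > κ_{⌈ab/π⌉} > 0`. -/
theorem block_bound_states_count (a b : ℝ) (ha : 0 < a) (hb : 0 < b)
    (g : ℝ → ℝ)
    (hg : ∀ κ : ℝ, g κ = a * b / Real.pi * Real.sqrt (1 - (κ / a) ^ 2)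
      - 2 / Real.pi * Real.arctan (κ / (a * Real.sqrt (1 - (κ / a) ^ 2)))) :
    ContinuousOn g (Ioo 0 a) ∧
    StrictAntiOn g (Ioo 0 a) ∧
    Tendsto g (nhdsWithin 0 (Ioi 0)) (nhds (a * b / Real.pi)) ∧
    Tendsto g (nhdsWithin a (Iio a)) (nhds (-1)) ∧
    ∃ κs : ℤ → ℝ,
      (∀ n : ℤ, 1 ≤ n → n ≤ ⌈a * b / Real.pi⌉ →
        κs n ∈ Ioo 0 a ∧ g (κs n) = (n : ℝ) - 1 ∧
        ∀ κ' ∈ Ioo 0 a, g κ' = (n : ℝ) - 1 → κ' = κs n) ∧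
      (∀ κ ∈ Ioo 0 a, (∃ m : ℕ, g κ = (m : ℝ)) →
        ∃ n : ℤ, 1 ≤ n ∧ n ≤ ⌈a * b / Real.pi⌉ ∧ κ = κs n) ∧
      (∀ m n : ℤ, 1 ≤ m → m < n → n ≤ ⌈a * b / Real.pi⌉ → κs n < κs m) := by
  classical
  have hpi : (0 : ℝ) < Real.pi := Real.pi_pos
  have hgf : g = fun κ => a * b / Real.pi * Real.sqrt (1 - (κ / a) ^ 2)
      - 2 / Real.pi * Real.arctan (κ / (a * Real.sqrt (1 - (κ / a) ^ 2))) := funext hg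
  subst hgf
  set s : ℝ → ℝ := fun κ => Real.sqrt (1 - (κ / a) ^ 2) with hsdef
  set G : ℝ → ℝ := fun κ => a * b / Real.pi * s κ
      - 2 / Real.pi * Real.arctan (κ / (a * s κ)) with hGdef
  have hc1 : (0 : ℝ) < a * b / Real.pi := by positivity
  have hc2 : (0 : ℝ) < 2 / Real.pi := by positivity
  -- basic facts about s on (0,a)
  have hargpos : ∀ κ ∈ Ioo (0:ℝ) a, 0 < 1 - (κ / a) ^ 2 := by
    intro κ hκ
    have h1 : κ / a < 1 := (div_lt_one ha).2 hκ.2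
    have h0 : 0 < κ / a := div_pos hκ.1 ha
    nlinarith
  have hspos : ∀ κ ∈ Ioo (0:ℝ) a, 0 < s κ := fun κ hκ =>
    Real.sqrt_pos.2 (hargpos κ hκ)
  have hslt1 : ∀ κ ∈ Ioo (0:ℝ) a, s κ < 1 := by
    intro κ hκ
    have h0 : 0 < κ / a := div_pos hκ.1 ha
    have : 1 - (κ / a) ^ 2 < 1 ^ 2 := by nlinarith
    exact (Real.sqrt_lt' one_pos).2 this
  have hsanti : ∀ x ∈ Ioo (0:ℝ) a, ∀ y ∈ Ioo (0:ℝ) a, x < y → s y < s x := by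
    intro x hx y hy hxy
    apply Real.sqrt_lt_sqrt (le_of_lt (hargpos y hy))
    have h1 : x / a < y / a := by gcongr
    have h0 : 0 < x / a := div_pos hx.1 ha
    nlinarith
  have hhmono : ∀ x ∈ Ioo (0:ℝ) a, ∀ y ∈ Ioo (0:ℝ) a, x < y →
      x / (a * s x) < y / (a * s y) := by
    intro x hx y hy hxy
    have hsx := hspos x hx
    have hsy := hspos y hy
    have h1 : a * s y < a * s x := by
      exact mul_lt_mul_of_pos_left (hsanti x hx y hy hxy) ha
    calc x / (a * s x) ≤ x / (a * s y) := by
          apply div_le_div_of_nonneg_left (le_of_lt hx.1) (mul_pos ha hsy) (le_of_lt h1)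
      _ < y / (a * s y) := by
          exact div_lt_div_of_pos_right hxy (mul_pos ha hsy)
  -- continuity
  have hscont : Continuous s := by
    apply Real.continuous_sqrt.comp
    continuity
  have hcont : ContinuousOn G (Ioo 0 a) := by
    apply ContinuousOn.sub
    · exact (continuous_const.mul hscont).continuousOn
    · apply ContinuousOn.mul continuousOn_const
      apply Real.continuous_arctan.comp_continuousOn
      apply ContinuousOn.div continuousOn_id
        ((continuous_const.mul hscont).continuousOn)
      intro κ hκ
      exact (mul_pos ha (hspos κ hκ)).ne'
  -- strict antitonicity
  have hanti : StrictAntiOn G (Ioo 0 a) := by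
    intro x hx y hy hxy
    have h1 : s y < s x := hsanti x hx y hy hxy
    have h2 : Real.arctan (x / (a * s x)) < Real.arctan (y / (a * s y)) :=
      Real.arctan_strictMono (hhmono x hx y hy hxy)
    simp only [hGdef]
    nlinarith
  -- limit at 0⁺
  have hs0 : s 0 = 1 := by simp [hsdef]
  have htend0 : Tendsto G (nhdsWithin 0 (Ioi 0)) (nhds (a * b / Real.pi)) := by
    have hca : ContinuousAt G 0 := by
      apply ContinuousAt.sub
      · exact (continuous_const.mul hscont).continuousAt
      · apply ContinuousAt.mul continuousAt_const
        apply Real.continuous_arctan.continuousAt.comp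
        apply ContinuousAt.div continuousAt_id
          ((continuous_const.mul hscont).continuousAt)
        show a * s 0 ≠ 0
        rw [hs0, mul_one]
        exact ha.ne'
    have hval : G 0 = a * b / Real.pi := by
      simp [hGdef, hs0]
    have := hca.tendsto.mono_left (nhdsWithin_le_nhds (s := Ioi (0:ℝ)))
    rwa [hval] at this
  -- limit at a⁻
  have hsa : Tendsto s (nhdsWithin a (Iio a)) (nhds 0) := by
    have : s a = 0 := by
      simp [hsdef, div_self ha.ne']
    have h := (hscont.tendsto a).mono_left (nhdsWithin_le_nhds (s := Iio a))
    rwa [this] at h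
  have hmemIoo : ∀ᶠ κ in nhdsWithin a (Iio a), κ ∈ Ioo (0:ℝ) a :=
    Ioo_mem_nhdsLT ha
  have hsden : Tendsto (fun κ => a * s κ) (nhdsWithin a (Iio a)) (nhdsWithin 0 (Ioi 0)) := by
    apply tendsto_nhdsWithin_of_tendsto_nhds_of_eventually_within
    · simpa using tendsto_const_nhds.mul hsa
    · filter_upwards [hmemIoo] with κ hκ
      exact mul_pos ha (hspos κ hκ)
  have harg : Tendsto (fun κ => κ / (a * s κ)) (nhdsWithin a (Iio a)) atTop := by
    have hinv : Tendsto (fun κ => (a * s κ)⁻¹) (nhdsWithin a (Iio a)) atTop :=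
      tendsto_inv_nhdsGT_zero.comp hsden
    have hnum : Tendsto (fun κ : ℝ => κ) (nhdsWithin a (Iio a)) (nhds a) :=
      tendsto_id.mono_left nhdsWithin_le_nhds
    simpa [div_eq_mul_inv] using hnum.pos_mul_atTop ha hinv
  have htenda : Tendsto G (nhdsWithin a (Iio a)) (nhds (-1)) := by
    have harctan : Tendsto (fun κ => Real.arctan (κ / (a * s κ)))
        (nhdsWithin a (Iio a)) (nhds (Real.pi / 2)) :=
      (Real.tendsto_arctan_atTop.mono_right nhdsWithin_le_nhds).comp harg
    have h := ((tendsto_const_nhds (x := a*b/Real.pi)).mul hsa).sub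
      ((tendsto_const_nhds (x := (2:ℝ)/Real.pi)).mul harctan)
    have hval : a * b / Real.pi * 0 - 2 / Real.pi * (Real.pi / 2) = -1 := by
      field_simp
      ring
    rwa [hval] at h
  -- surjectivity onto (-1, ab/π)
  have hrange : ∀ y : ℝ, -1 < y → y < a * b / Real.pi → ∃ κ ∈ Ioo (0:ℝ) a, G κ = y := by
    intro y hy1 hy2
    have h1 : ∀ᶠ κ in nhdsWithin 0 (Ioi 0), y < G κ :=
      htend0.eventually (eventually_gt_nhds hy2)
    have h1' : ∀ᶠ κ in nhdsWithin 0 (Ioi (0:ℝ)), κ ∈ Ioo (0:ℝ) a :=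
      Ioo_mem_nhdsGT ha
    obtain ⟨x₀, hx₀y, hx₀⟩ := (h1.and h1').exists
    have h2 : ∀ᶠ κ in nhdsWithin a (Iio a), G κ < y :=
      htenda.eventually (eventually_lt_nhds hy1)
    have h2' : ∀ᶠ κ in nhdsWithin a (Iio a), κ ∈ Ioo x₀ a :=
      Ioo_mem_nhdsLT hx₀.2
    obtain ⟨x₁, hx₁y, hx₁⟩ := (h2.and h2').exists
    have hsub : Icc x₀ x₁ ⊆ Ioo (0:ℝ) a := fun t ht =>
      ⟨lt_of_lt_of_le hx₀.1 ht.1, lt_of_le_of_lt ht.2 hx₁.2⟩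
    have hivt := intermediate_value_Icc' (le_of_lt hx₁.1) (hcont.mono hsub)
    obtain ⟨κ, hκmem, hκ⟩ := hivt ⟨le_of_lt hx₁y, le_of_lt hx₀y⟩
    exact ⟨κ, hsub hκmem, hκ⟩
  -- existence for each n
  have hex : ∀ n : ℤ, 1 ≤ n → n ≤ ⌈a * b / Real.pi⌉ →
      ∃ κ ∈ Ioo (0:ℝ) a, G κ = (n : ℝ) - 1 := by
    intro n h1 h2
    apply hrange
    · have : (1:ℝ) ≤ (n:ℝ) := by exact_mod_cast h1
      linarith
    · have hceil : (⌈a * b / Real.pi⌉ : ℝ) < a * b / Real.pi + 1 :=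
        Int.ceil_lt_add_one _
      have : (n : ℝ) ≤ (⌈a * b / Real.pi⌉ : ℝ) := by exact_mod_cast h2
      linarith
  set κs : ℤ → ℝ := fun n =>
    if h : 1 ≤ n ∧ n ≤ ⌈a * b / Real.pi⌉ then (hex n h.1 h.2).choose else 0 with hκsdef
  have main : ∀ n : ℤ, (h1 : 1 ≤ n) → (h2 : n ≤ ⌈a * b / Real.pi⌉) →
      κs n ∈ Ioo (0:ℝ) a ∧ G (κs n) = (n : ℝ) - 1 := by
    intro n h1 h2
    have heq : κs n = (hex n h1 h2).choose := dif_pos ⟨h1, h2⟩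
    rw [heq]
    obtain ⟨hm, hv⟩ := (hex n h1 h2).choose_spec
    exact ⟨hm, hv⟩
  refine ⟨hcont, hanti, htend0, htenda, κs, ?_, ?_, ?_⟩
  · intro n h1 h2
    obtain ⟨hmem, hval⟩ := main n h1 h2
    refine ⟨hmem, hval, ?_⟩
    intro κ' hκ' hval'
    exact hanti.injOn hκ' hmem (by rw [hval, hval'])
  · intro κ hκ ⟨m, hm⟩
    -- G κ < ab/π, so m < ab/π
    have hatanpos : 0 < Real.arctan (κ / (a * s κ)) := by
      rw [← Real.arctan_zero]
      exact Real.arctan_strictMono (div_pos hκ.1 (mul_pos ha (hspos κ hκ)))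
    have hlt : G κ < a * b / Real.pi := by
      have h1 : s κ < 1 := hslt1 κ hκ
      simp only [hGdef]
      nlinarith
    refine ⟨(m : ℤ) + 1, by omega, ?_, ?_⟩
    · rw [Int.add_one_le_iff, Int.lt_ceil]
      push_cast
      rw [← hm]
      exact hlt
    · have h1 : (1 : ℤ) ≤ (m : ℤ) + 1 := by omega
      have h2 : (m : ℤ) + 1 ≤ ⌈a * b / Real.pi⌉ := by
        rw [Int.add_one_le_iff, Int.lt_ceil]
        push_cast
        rw [← hm]
        exact hlt
      obtain ⟨hmem, hval⟩ := main _ h1 h2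
      apply hanti.injOn hκ hmem
      rw [hval, hm]
      push_cast
      ring
  · intro m n h1 hmn h2
    have hm2 : m ≤ ⌈a * b / Real.pi⌉ := le_of_lt (lt_of_lt_of_le hmn h2)
    have hn1 : 1 ≤ n := le_of_lt (lt_of_le_of_lt h1 hmn)
    obtain ⟨hmmem, hmval⟩ := main m h1 hm2
    obtain ⟨hnmem, hnval⟩ := main n hn1 h2
    by_contra hcon
    push_neg at hcon
    rcases eq_or_lt_of_le hcon with heq | hlt
    · have : ((n : ℝ) - 1) = ((m : ℝ) - 1) := by rw [← hnval, ← hmval, heq]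
      have : (m : ℝ) = (n : ℝ) := by linarith
      have : m = n := by exact_mod_cast this
      omega
    · have := hanti hmmem hnmem hlt
      rw [hmval, hnval] at this
      have : (n : ℝ) < (m : ℝ) := by linarith
      have : n < m := by exact_mod_cast this
      omega
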